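/- Suppose n ≥ 3 agents, m ≥ 2 objects, and the domain of preferences contains all single-minded dichotomous classical preferences (including ones with negative income effect, where w_i is increasing in t). Then there is no mechanism on this domain that is simultaneously dominant strategy incentive compatible, Pareto efficient, individually rational, and satisfies no subsidy. -/

import Mathlib

open Finset

/-- A classical preference over outcomes (bundle, payment). -/
structure ClassicalPref (m : ℕ) where
  /-- the weak preference relation over outcomes -/
  pref : (Finset (Fin m) × ℝ) → (Finset (Fin m) × ℝ) → Prop
  total : ∀ x y, pref x y ∨ pref y x
  transitive : ∀ x y z, pref x y → pref y z → pref x z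
  money_mono : ∀ (A : Finset (Fin m)) (t t' : ℝ), t < t' →
    pref (A, t) (A, t') ∧ ¬ pref (A, t') (A, t)
  free_disposal : ∀ (A A' : Finset (Fin m)) (t : ℝ), A' ⊆ A → pref (A, t) (A', t)
  continuity : ∀ (Z : Finset (Fin m) × ℝ) (A : Finset (Fin m)),
    IsClosed {t : ℝ | pref (A, t) Z} ∧ IsClosed {t : ℝ | pref Z (A, t)}
  finiteness : ∀ (t : ℝ) (A A' : Finset (Fin m)), ∃ t' t'' : ℝ,
    pref (A', t') (A, t) ∧ pref (A, t) (A', t'')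

/-- Willingness to pay: the indifference payment increment to `(∅,t)`. -/
noncomputable def WPc {m : ℕ} (R : ClassicalPref m) (A : Finset (Fin m)) (t : ℝ) : ℝ :=
  sInf {x : ℝ | R.pref (∅, t) (A, t + x)}

/-- An allocation consists of pairwise-disjoint bundles. -/
def DisjointAlloc {n m : ℕ} (A : Fin n → Finset (Fin m)) : Prop :=
  ∀ i j : Fin n, i ≠ j → Disjoint (A i) (A j)

/-- `(A',t')` Pareto dominates `(A,t)` at profile `Rp`. -/
def Dominates {n m : ℕ} (Rp : Fin n → ClassicalPref m)
    (A : Fin n → Finset (Fin m)) (t : Fin n → ℝ)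
    (A' : Fin n → Finset (Fin m)) (t' : Fin n → ℝ) : Prop :=
  DisjointAlloc A' ∧ (∀ i, (Rp i).pref (A' i, t' i) (A i, t i)) ∧
  (∑ i, t i ≤ ∑ i, t' i) ∧
  ((∃ i, ¬ (Rp i).pref (A i, t i) (A' i, t' i)) ∨ ∑ i, t i < ∑ i, t' i)

/-- A single-minded dichotomous classical preference. -/
def IsSingleMinded {m : ℕ} (R : ClassicalPref m) : Prop :=
  ∃ (S0 : Finset (Fin m)) (w : ℝ → ℝ), S0 ≠ ∅ ∧ (∀ t : ℝ, 0 < w t) ∧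
    ∀ (A : Finset (Fin m)) (t : ℝ),
      (S0 ⊆ A → R.pref (A, t + w t) (∅, t) ∧ R.pref (∅, t) (A, t + w t)) ∧
      (¬ S0 ⊆ A → R.pref (A, t) (∅, t) ∧ R.pref (∅, t) (A, t))

/-- A quasilinear dichotomous classical preference. -/
def IsQLDich {m : ℕ} (R : ClassicalPref m) : Prop :=
  ∃ (S : Set (Finset (Fin m))) (v : ℝ), 0 < v ∧ S.Nonempty ∧
    (∅ : Finset (Fin m)) ∉ S ∧ (∀ A ∈ S, ∀ B : Finset (Fin m), A ⊆ B → B ∈ S) ∧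
    ∀ (A : Finset (Fin m)) (t : ℝ),
      (A ∈ S → R.pref (A, t + v) (∅, t) ∧ R.pref (∅, t) (A, t + v)) ∧
      (A ∉ S → R.pref (A, t) (∅, t) ∧ R.pref (∅, t) (A, t))

noncomputable def hh (y : ℝ) : ℝ := if 1 ≤ y then (y-4)/3 else y-2
noncomputable def kof (t : ℝ) : ℝ := if -1 ≤ t then 3*t+4 else t+2
lemma hh_kof (t : ℝ) : hh (kof t) = t := by unfold hh kof; split_ifs <;> linarith
lemma hh_mono : StrictMono hh := by intro x y hxy; unfold hh; split_ifs <;> linarith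
lemma hh_le (y : ℝ) : hh y ≤ y := by unfold hh; split_ifs <;> linarith
lemma kof_gt (t : ℝ) : t < kof t := by unfold kof; split_ifs <;> linarith
lemma kof_zero : kof 0 = 4 := by norm_num [kof]
lemma hh_ge (q : ℝ) (h1 : q ≤ 11/5) : q - 14/5 ≤ hh q := by
  unfold hh; split_ifs <;> linarith
lemma hh_cont : Continuous hh := by
  unfold hh
  exact Continuous.if_le (by continuity) (by continuity) continuous_const continuous_id
    (fun y hy => by rw [← hy]; norm_num)

/-- bundled data for a single-minded preference built from a utility. -/
structure SMD (m : ℕ) where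
  S : Finset (Fin m)
  g : ℝ → ℝ
  kf : ℝ → ℝ
  hS : S.Nonempty
  hanti : StrictAnti g
  hcont : Continuous g
  hsurj : ∀ c : ℝ, ∃ t, g t = c
  hfd : ∀ t : ℝ, -t ≤ g t
  hgk : ∀ t : ℝ, g (kf t) = -t
  hlt : ∀ t : ℝ, t < kf t

namespace SMD

variable {m : ℕ} (d : SMD m)

/-- the utility function -/
def u (A : Finset (Fin m)) (t : ℝ) : ℝ := if d.S ⊆ A then d.g t else -t

lemma u_anti (A : Finset (Fin m)) : StrictAnti (d.u A) := by
  unfold u; by_cases h : d.S ⊆ A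
  · simpa [h] using d.hanti
  · intro x y hxy; simp only [h, if_false]; exact neg_lt_neg hxy

lemma u_cont (A : Finset (Fin m)) : Continuous (d.u A) := by
  unfold u; by_cases h : d.S ⊆ A
  · simpa [h] using d.hcont
  · simpa [h] using continuous_neg

lemma u_surj (A : Finset (Fin m)) (c : ℝ) : ∃ t, d.u A t = c := by
  unfold u; by_cases h : d.S ⊆ A
  · simpa [h] using d.hsurj c
  · exact ⟨-c, by simp [h]⟩

lemma u_fd (A A' : Finset (Fin m)) (hsub : A' ⊆ A) (t : ℝ) : d.u A' t ≤ d.u A t := by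
  unfold u
  by_cases h1 : d.S ⊆ A'
  · have h2 : d.S ⊆ A := h1.trans hsub
    simp [h1, h2]
  · by_cases h2 : d.S ⊆ A
    · simpa [h1, h2] using d.hfd t
    · simp [h1, h2]

noncomputable def pref : ClassicalPref m where
  pref x y := d.u y.1 y.2 ≤ d.u x.1 x.2
  total x y := le_total _ _
  transitive x y z h1 h2 := le_trans h2 h1
  money_mono A t t' h := ⟨(d.u_anti A h).le, not_le.2 (d.u_anti A h)⟩
  free_disposal A A' t h := d.u_fd A A' h t
  continuity Z A := ⟨IsClosed.preimage (d.u_cont A) isClosed_Ici,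
    IsClosed.preimage (d.u_cont A) isClosed_Iic⟩
  finiteness t A A' := by
    obtain ⟨s, hs⟩ := d.u_surj A' (d.u A t)
    exact ⟨s, s, le_of_eq hs.symm, le_of_eq hs⟩

lemma pref_def (x y : Finset (Fin m) × ℝ) :
    d.pref.pref x y ↔ d.u y.1 y.2 ≤ d.u x.1 x.2 := Iff.rfl

lemma not_sub_empty : ¬ d.S ⊆ (∅ : Finset (Fin m)) := by
  rw [Finset.subset_empty]
  exact d.hS.ne_empty

lemma sm : IsSingleMinded d.pref := by
  refine ⟨d.S, fun t => d.kf t - t, d.hS.ne_empty, fun t => sub_pos.2 (d.hlt t), ?_⟩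
  intro A t
  constructor
  · intro hSA
    have e : t + (d.kf t - t) = d.kf t := by ring
    constructor <;>
    · rw [pref_def]; dsimp; rw [e]; unfold u
      simp [hSA, d.not_sub_empty, d.hgk t]
  · intro hSA
    constructor <;>
    · rw [pref_def]; dsimp; unfold u
      simp [hSA, d.not_sub_empty]

end SMD


noncomputable def nqD {m : ℕ} (S : Finset (Fin m)) (hS : S.Nonempty) : SMD m where
  S := S
  g := fun y => -(hh y)
  kf := kof
  hS := hS
  hanti := fun x y hxy => neg_lt_neg (hh_mono hxy)
  hcont := hh_cont.neg
  hsurj := fun c => ⟨kof (-c), by show -hh (kof (-c)) = c; rw [hh_kof]; ring⟩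
  hfd := fun t => neg_le_neg (hh_le t)
  hgk := fun t => by show -hh (kof t) = -t; rw [hh_kof]
  hlt := kof_gt

noncomputable def qlD {m : ℕ} (S : Finset (Fin m)) (hS : S.Nonempty) (v : ℝ) (hv : 0 < v) : SMD m where
  S := S
  g := fun y => v - y
  kf := fun t => t + v
  hS := hS
  hanti := fun x y hxy => by dsimp; linarith
  hcont := by continuity
  hsurj := fun c => ⟨v - c, by ring⟩
  hfd := fun t => by linarith
  hgk := fun t => by ring
  hlt := fun t => by linarith

lemma disj_pair {n m : ℕ} {a b : Fin m} (hab : a ≠ b) {i0 i1 : Fin n} (h01 : i0 ≠ i1) :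
    DisjointAlloc (fun i : Fin n =>
      if i = i0 then ({a} : Finset (Fin m)) else if i = i1 then {b} else ∅) := by
  have hba : b ≠ a := fun hba => hab hba.symm
  intro i j hij
  try dsimp only
  split_ifs <;> simp_all [Finset.disjoint_singleton_left, Finset.disjoint_singleton_right]

lemma lemU {n m : ℕ} {a b : Fin m} (hab : a ≠ b) {i0 i1 : Fin n} (h01 : i0 ≠ i1)
    (D : Fin n → SMD m)
    (hD0 : (D i0).S = {a}) (hD1 : (D i1).S = {b})
    (hDr : ∀ i, i ≠ i0 → i ≠ i1 → (D i).S = {a, b} ∧ (D i).g = fun y => 6 - y)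
    (hsum : 6 < (D i0).kf 0 + (D i1).kf 0)
    (A : Fin n → Finset (Fin m)) (q : Fin n → ℝ)
    (hdisj : DisjointAlloc A)
    (hPE : ¬ ∃ A' t', Dominates (fun i => (D i).pref) A q A' t')
    (hIR : ∀ i, ((D i).pref).pref (A i, q i) (∅, 0))
    (hNS : ∀ i, 0 ≤ q i) :
    a ∈ A i0 ∧ b ∈ A i1 := by
  have hq0 : ∀ i, ¬ (D i).S ⊆ A i → q i = 0 := by
    intro i hi
    have h := hIR i
    rw [SMD.pref_def] at h
    dsimp only at h
    unfold SMD.u at h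
    rw [if_neg hi, if_neg (D i).not_sub_empty] at h
    have := hNS i
    linarith
  have key : ∀ (A' : Fin n → Finset (Fin m)) (t' : Fin n → ℝ), DisjointAlloc A' →
      (∀ i, (D i).u (A' i) (t' i) = (D i).u (A i) (q i)) →
      (∑ i, q i < ∑ i, t' i) → False := by
    intro A' t' hd hu hlt
    exact hPE ⟨A', t', hd, fun i => le_of_eq (hu i).symm, le_of_lt hlt, Or.inr hlt⟩
  have hamem : a ∈ ({a, b} : Finset (Fin m)) := mem_insert_self _ _
  have hbmem : b ∈ ({a, b} : Finset (Fin m)) := mem_insert_of_mem (mem_singleton_self _)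
  have habne : ({a, b} : Finset (Fin m)).Nonempty := ⟨a, hamem⟩
  by_cases ha : a ∈ A i0
  · by_cases hb : b ∈ A i1
    · exact ⟨ha, hb⟩
    -- branch 2 : a served, b not
    · exfalso
      have h1ns : ¬ (D i1).S ⊆ A i1 := by rw [hD1, Finset.singleton_subset_iff]; exact hb
      have hq10 : q i1 = 0 := hq0 i1 h1ns
      have norest : ∀ i, i ≠ i0 → i ≠ i1 → ¬ (D i).S ⊆ A i := by
        intro i hi0 hi1 hsub
        rw [(hDr i hi0 hi1).1] at hsub
        exact (Finset.disjoint_left.1 (hdisj i i0 hi0) (hsub hamem)) ha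
      refine key (fun i => if i = i0 then {a} else if i = i1 then {b} else ∅)
        (fun i => if i = i0 then q i0 else if i = i1 then (D i1).kf 0 else q i)
        (disj_pair hab h01) ?_ ?_
      · intro i
        rcases eq_or_ne i i0 with rfl | hi0
        · try dsimp only
          rw [if_pos rfl, if_pos rfl]
          unfold SMD.u
          rw [if_pos (by rw [hD0]), if_pos (by rw [hD0, Finset.singleton_subset_iff]; exact ha)]
        · rcases eq_or_ne i i1 with rfl | hi1
          · try dsimp only
            rw [if_neg hi0, if_neg hi0, if_pos rfl, if_pos rfl]
            unfold SMD.u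
            rw [if_pos (by rw [hD1]), if_neg h1ns, (D i).hgk 0, hq10]
          · try dsimp only
            rw [if_neg hi0, if_neg hi0, if_neg hi1, if_neg hi1]
            unfold SMD.u
            rw [if_neg (D i).not_sub_empty, if_neg (norest i hi0 hi1)]
      · rw [← sub_pos, ← Finset.sum_sub_distrib]
        have hmem1 : i1 ∈ (univ : Finset (Fin n)) := mem_univ _
        rw [← Finset.add_sum_erase _ _ hmem1]
        have e1 : (if i1 = i0 then q i0 else if i1 = i1 then (D i1).kf 0 else q i1) - q i1
            = (D i1).kf 0 := by
          rw [if_neg (fun h => h01 h.symm), if_pos rfl, hq10]; ring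
        rw [e1]
        have erest : ∑ i ∈ univ.erase i1,
            ((if i = i0 then q i0 else if i = i1 then (D i1).kf 0 else q i) - q i) = 0 := by
          apply Finset.sum_eq_zero
          intro i hi
          rcases eq_or_ne i i0 with rfl | hi0
          · rw [if_pos rfl]; ring
          · rw [if_neg hi0, if_neg (Finset.mem_erase.1 hi).1]; ring
        rw [erest]
        have := (D i1).hlt 0
        linarith
  · -- branch 1 : a not served to i0
    exfalso
    have h0ns : ¬ (D i0).S ⊆ A i0 := by rw [hD0, Finset.singleton_subset_iff]; exact ha
    have hq00 : q i0 = 0 := hq0 i0 h0ns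
    refine key (fun i => if i = i0 then {a} else if i = i1 then {b} else ∅)
      (fun i => if i = i0 then (D i0).kf 0 else
        if i = i1 then (if b ∈ A i1 then q i1 else (D i1).kf 0) else
        (if ({a, b} : Finset (Fin m)) ⊆ A i then q i - 6 else q i))
      (disj_pair hab h01) ?_ ?_
    · intro i
      rcases eq_or_ne i i0 with rfl | hi0
      · try dsimp only
        rw [if_pos rfl, if_pos rfl]
        unfold SMD.u
        rw [if_pos (by rw [hD0]), if_neg h0ns, (D i).hgk 0, hq00]
      · rcases eq_or_ne i i1 with rfl | hi1
        · try dsimp only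
          rw [if_neg hi0, if_neg hi0, if_pos rfl, if_pos rfl]
          by_cases hb1 : b ∈ A i
          · rw [if_pos hb1]
            unfold SMD.u
            rw [if_pos (by rw [hD1]), if_pos (by rw [hD1, Finset.singleton_subset_iff]; exact hb1)]
          · rw [if_neg hb1]
            unfold SMD.u
            rw [if_pos (by rw [hD1]),
              if_neg (by rw [hD1, Finset.singleton_subset_iff]; exact hb1),
              (D i).hgk 0, hq0 i (by rw [hD1, Finset.singleton_subset_iff]; exact hb1)]
        · try dsimp only
          rw [if_neg hi0, if_neg hi0, if_neg hi1, if_neg hi1]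
          unfold SMD.u
          rw [if_neg (D i).not_sub_empty]
          by_cases hsrv : ({a, b} : Finset (Fin m)) ⊆ A i
          · rw [if_pos hsrv, if_pos (by rw [(hDr i hi0 hi1).1]; exact hsrv), (hDr i hi0 hi1).2]
            ring
          · rw [if_neg hsrv, if_neg (by rw [(hDr i hi0 hi1).1]; exact hsrv)]
    · rw [← sub_pos, ← Finset.sum_sub_distrib]
      have hmem0 : i0 ∈ (univ : Finset (Fin n)) := mem_univ _
      have hmem1 : i1 ∈ (univ : Finset (Fin n)).erase i0 :=
        Finset.mem_erase.2 ⟨fun h => h01 h.symm, mem_univ _⟩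
      rw [← Finset.add_sum_erase _ _ hmem0, ← Finset.add_sum_erase _ _ hmem1]
      have e0 : (if i0 = i0 then (D i0).kf 0 else
          if i0 = i1 then (if b ∈ A i1 then q i1 else (D i1).kf 0) else
          (if ({a, b} : Finset (Fin m)) ⊆ A i0 then q i0 - 6 else q i0)) - q i0
          = (D i0).kf 0 := by rw [if_pos rfl, hq00]; ring
      rw [e0]
      have hrestform : ∀ i ∈ ((univ : Finset (Fin n)).erase i0).erase i1,
          ((if i = i0 then (D i0).kf 0 else
            if i = i1 then (if b ∈ A i1 then q i1 else (D i1).kf 0) else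
            (if ({a, b} : Finset (Fin m)) ⊆ A i then q i - 6 else q i)) - q i)
          = (if ({a, b} : Finset (Fin m)) ⊆ A i then (-6 : ℝ) else 0) := by
        intro i hi
        have hi1 : i ≠ i1 := (Finset.mem_erase.1 hi).1
        have hi0 : i ≠ i0 := (Finset.mem_erase.1 (Finset.mem_erase.1 hi).2).1
        rw [if_neg hi0, if_neg hi1]
        by_cases hsrv : ({a, b} : Finset (Fin m)) ⊆ A i
        · rw [if_pos hsrv, if_pos hsrv]; ring
        · rw [if_neg hsrv, if_neg hsrv]; ring
      rw [Finset.sum_congr rfl hrestform]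
      by_cases hb1 : b ∈ A i1
      · -- no other agent can be served (needs b)
        have e1 : (if i1 = i0 then (D i0).kf 0 else
            if i1 = i1 then (if b ∈ A i1 then q i1 else (D i1).kf 0) else
            (if ({a, b} : Finset (Fin m)) ⊆ A i1 then q i1 - 6 else q i1)) - q i1 = 0 := by
          rw [if_neg (fun h => h01 h.symm), if_pos rfl, if_pos hb1]; ring
        have hz : ∑ i ∈ ((univ : Finset (Fin n)).erase i0).erase i1,
            (if ({a, b} : Finset (Fin m)) ⊆ A i then (-6 : ℝ) else 0) = 0 := by
          apply Finset.sum_eq_zero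
          intro i hi
          have hi1 : i ≠ i1 := (Finset.mem_erase.1 hi).1
          rw [if_neg]
          intro hsrv
          exact (Finset.disjoint_left.1 (hdisj i i1 hi1) (hsrv hbmem)) hb1
        rw [e1, hz]
        have := (D i0).hlt 0
        linarith
      · have hq10 : q i1 = 0 := hq0 i1 (by rw [hD1, Finset.singleton_subset_iff]; exact hb1)
        have e1 : (if i1 = i0 then (D i0).kf 0 else
            if i1 = i1 then (if b ∈ A i1 then q i1 else (D i1).kf 0) else
            (if ({a, b} : Finset (Fin m)) ⊆ A i1 then q i1 - 6 else q i1)) - q i1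
            = (D i1).kf 0 := by
          rw [if_neg (fun h => h01 h.symm), if_pos rfl, if_neg hb1, hq10]; ring
        rw [e1]
        have hge : (-6 : ℝ) ≤ ∑ i ∈ ((univ : Finset (Fin n)).erase i0).erase i1,
            (if ({a, b} : Finset (Fin m)) ⊆ A i then (-6 : ℝ) else 0) := by
          rw [Finset.sum_ite, Finset.sum_const, Finset.sum_const_zero, add_zero]
          have hcard : (Finset.filter (fun i => ({a, b} : Finset (Fin m)) ⊆ A i)
              (((univ : Finset (Fin n)).erase i0).erase i1)).card ≤ 1 := by
            apply Finset.card_le_one.2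
            intro x hx y hy
            by_contra hxy
            exact (Finset.disjoint_left.1 (hdisj x y hxy)
              ((Finset.mem_filter.1 hx).2 hamem)) ((Finset.mem_filter.1 hy).2 hamem)
          have : ((Finset.filter (fun i => ({a, b} : Finset (Fin m)) ⊆ A i)
              (((univ : Finset (Fin n)).erase i0).erase i1)).card : ℝ) ≤ 1 := by
            exact_mod_cast hcard
          rw [nsmul_eq_mul]
          nlinarith
        linarith

lemma SMD.pay_zero {m : ℕ} (d : SMD m) {X : Finset (Fin m)} {c : ℝ}
    (hIR : d.pref.pref (X, c) (∅, 0)) (hNS : 0 ≤ c) (h : ¬ d.S ⊆ X) : c = 0 := by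
  rw [SMD.pref_def] at hIR
  dsimp only at hIR
  unfold SMD.u at hIR
  rw [if_neg h, if_neg d.not_sub_empty] at hIR
  linarith

@[simp] lemma nqD_S {m : ℕ} (S : Finset (Fin m)) (hS : S.Nonempty) : (nqD S hS).S = S := rfl
@[simp] lemma nqD_g {m : ℕ} (S : Finset (Fin m)) (hS : S.Nonempty) :
    (nqD S hS).g = fun y => -(hh y) := rfl
@[simp] lemma nqD_kf {m : ℕ} (S : Finset (Fin m)) (hS : S.Nonempty) : (nqD S hS).kf = kof := rfl
@[simp] lemma qlD_S {m : ℕ} (S : Finset (Fin m)) (hS : S.Nonempty) (v : ℝ) (hv : 0 < v) :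
    (qlD S hS v hv).S = S := rfl
@[simp] lemma qlD_g {m : ℕ} (S : Finset (Fin m)) (hS : S.Nonempty) (v : ℝ) (hv : 0 < v) :
    (qlD S hS v hv).g = fun y => v - y := rfl
@[simp] lemma qlD_kf {m : ℕ} (S : Finset (Fin m)) (hS : S.Nonempty) (v : ℝ) (hv : 0 < v) :
    (qlD S hS v hv).kf = fun t => t + v := rfl

lemma nqD_kf0 {m : ℕ} (S : Finset (Fin m)) (hS : S.Nonempty) : (nqD S hS).kf 0 = 4 := by
  show kof 0 = 4; exact kof_zero

lemma qlD_kf0 {m : ℕ} (S : Finset (Fin m)) (hS : S.Nonempty) (v : ℝ) (hv : 0 < v) :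
    (qlD S hS v hv).kf 0 = v := by
  show (0:ℝ) + v = v; ring

noncomputable def Dstar {n m : ℕ} (a b : Fin m) (i0 i1 : Fin n) : Fin n → SMD m :=
  fun i => if i = i0 then nqD {a} (Finset.singleton_nonempty a)
    else if i = i1 then nqD {b} (Finset.singleton_nonempty b)
    else qlD {a, b} (Finset.insert_nonempty a {b}) 6 (by norm_num)

lemma Dstar_i0 {n m : ℕ} (a b : Fin m) (i0 i1 : Fin n) :
    Dstar a b i0 i1 i0 = nqD {a} (Finset.singleton_nonempty a) := by
  simp [Dstar]

lemma Dstar_i1 {n m : ℕ} (a b : Fin m) {i0 i1 : Fin n} (h01 : i0 ≠ i1) :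
    Dstar a b i0 i1 i1 = nqD {b} (Finset.singleton_nonempty b) := by
  have h := Ne.symm h01
  simp [Dstar, h]

lemma Dstar_rest {n m : ℕ} (a b : Fin m) {i0 i1 i : Fin n} (hi0 : i ≠ i0) (hi1 : i ≠ i1) :
    Dstar a b i0 i1 i = qlD {a, b} (Finset.insert_nonempty a {b}) 6 (by norm_num) := by
  simp [Dstar, hi0, hi1]


set_option maxHeartbeats 2000000 in
/-- Impossibility: if `n ≥ 3`, `m ≥ 2`, and the domain `T` contains all single-minded
dichotomous classical preferences, no mechanism on `T^n` is simultaneously DSIC,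
Pareto efficient, individually rational, and satisfies no subsidy. -/
theorem stmt_9 (n m : ℕ) (hn : 3 ≤ n) (hm : 2 ≤ m)
    (T : Set (ClassicalPref m)) (hT : ∀ R : ClassicalPref m, IsSingleMinded R → R ∈ T) :
    ¬ ∃ (f : (Fin n → ClassicalPref m) → Fin n → Finset (Fin m))
        (p : (Fin n → ClassicalPref m) → Fin n → ℝ),
      (∀ Rp : Fin n → ClassicalPref m, (∀ j, Rp j ∈ T) → DisjointAlloc (f Rp)) ∧
      -- DSIC
      (∀ Rp : Fin n → ClassicalPref m, (∀ j, Rp j ∈ T) →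
        ∀ (i : Fin n) (R' : ClassicalPref m), R' ∈ T →
          (Rp i).pref (f Rp i, p Rp i)
            (f (Function.update Rp i R') i, p (Function.update Rp i R') i)) ∧
      -- Pareto efficiency
      (∀ Rp : Fin n → ClassicalPref m, (∀ j, Rp j ∈ T) →
        ¬ ∃ (A' : Fin n → Finset (Fin m)) (t' : Fin n → ℝ),
          Dominates Rp (f Rp) (p Rp) A' t') ∧
      -- Individual rationality
      (∀ Rp : Fin n → ClassicalPref m, (∀ j, Rp j ∈ T) →
        ∀ i, (Rp i).pref (f Rp i, p Rp i) (∅, 0)) ∧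
      -- No subsidy
      (∀ Rp : Fin n → ClassicalPref m, (∀ j, Rp j ∈ T) → ∀ i, 0 ≤ p Rp i) := by
  rintro ⟨f, p, hAlloc, hDSIC, hPE, hIR, hNS⟩
  set a : Fin m := ⟨0, by omega⟩ with ha_def
  set b : Fin m := ⟨1, by omega⟩ with hb_def
  have hab : a ≠ b := Fin.ne_of_val_ne (by norm_num)
  set i0 : Fin n := ⟨0, by omega⟩ with hi0_def
  set i1 : Fin n := ⟨1, by omega⟩ with hi1_def
  set i2 : Fin n := ⟨2, by omega⟩ with hi2_def
  have h01 : i0 ≠ i1 := Fin.ne_of_val_ne (by norm_num)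
  have h02 : i0 ≠ i2 := Fin.ne_of_val_ne (by norm_num)
  have h12 : i1 ≠ i2 := Fin.ne_of_val_ne (by norm_num)
  set Ds := Dstar (n := n) a b i0 i1 with hDs_def
  set Pst : Fin n → ClassicalPref m := fun i => (Ds i).pref with hPst
  have hTst : ∀ j, Pst j ∈ T := fun j => hT _ (Ds j).sm
  obtain ⟨haS, hbS⟩ := lemU hab h01 Ds
    (by rw [hDs_def, Dstar_i0]; rfl)
    (by rw [hDs_def, Dstar_i1 a b h01]; rfl)
    (fun i hi0 hi1 => by rw [hDs_def, Dstar_rest a b hi0 hi1]; exact ⟨rfl, rfl⟩)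
    (by rw [hDs_def, Dstar_i0, Dstar_i1 a b h01, nqD_kf0, nqD_kf0]; norm_num)
    (f Pst) (p Pst) (hAlloc Pst hTst) (hPE Pst hTst) (hIR Pst hTst) (hNS Pst hTst)
  -- profile where agent 0 reports quasilinear with value 11/5
  set d0 : SMD m := qlD {a} (Finset.singleton_nonempty a) (11/5) (by norm_num) with hd0
  set Ds0 := Function.update Ds i0 d0 with hDs0
  set P0 : Fin n → ClassicalPref m := fun i => (Ds0 i).pref with hP0
  have hT0 : ∀ j, P0 j ∈ T := fun j => hT _ (Ds0 j).sm
  obtain ⟨ha0, -⟩ := lemU hab h01 Ds0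
    (by rw [hDs0, Function.update_self, hd0]; rfl)
    (by rw [hDs0, Function.update_of_ne (Ne.symm h01), hDs_def, Dstar_i1 a b h01]; rfl)
    (fun i hi0 hi1 => by
      rw [hDs0, Function.update_of_ne hi0, hDs_def, Dstar_rest a b hi0 hi1]; exact ⟨rfl, rfl⟩)
    (by rw [hDs0, Function.update_self, Function.update_of_ne (Ne.symm h01), hDs_def,
          Dstar_i1 a b h01, hd0, qlD_kf0, nqD_kf0]; norm_num)
    (f P0) (p P0) (hAlloc P0 hT0) (hPE P0 hT0) (hIR P0 hT0) (hNS P0 hT0)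
  -- IR bound at P0
  have hIR0 := hIR P0 hT0 i0
  have e2 : P0 i0 = d0.pref := by
    show (Ds0 i0).pref = d0.pref
    rw [hDs0, Function.update_self]
  rw [e2, SMD.pref_def] at hIR0
  dsimp only at hIR0
  unfold SMD.u at hIR0
  rw [hd0, qlD_S, qlD_g, if_neg (by simp), if_pos (Finset.singleton_subset_iff.2 ha0)] at hIR0
  dsimp only at hIR0
  have hb0 : p P0 i0 ≤ 11 / 5 := by linarith
  -- DSIC at i0
  have hD := hDSIC Pst hTst i0 d0.pref (hT _ d0.sm)
  have eup : Function.update Pst i0 d0.pref = P0 := by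
    funext j
    rcases eq_or_ne j i0 with rfl | hj
    · rw [Function.update_self]
      show d0.pref = (Ds0 i0).pref
      rw [hDs0, Function.update_self]
    · rw [Function.update_of_ne hj]
      show (Ds j).pref = (Ds0 j).pref
      rw [hDs0, Function.update_of_ne hj]
  rw [eup] at hD
  have e0p : Pst i0 = (nqD {a} (Finset.singleton_nonempty a)).pref := by
    show (Ds i0).pref = _
    rw [hDs_def, Dstar_i0]
  rw [e0p, SMD.pref_def] at hD
  dsimp only at hD
  unfold SMD.u at hD
  rw [nqD_S, nqD_g, if_pos (Finset.singleton_subset_iff.2 haS),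
    if_pos (Finset.singleton_subset_iff.2 ha0)] at hD
  dsimp only at hD
  have hple0 : p Pst i0 ≤ 11 / 5 := by
    have h1 : hh (p Pst i0) ≤ hh (p P0 i0) := by linarith
    have := hh_mono.le_iff_le.1 h1
    linarith
  -- profile where agent 1 reports quasilinear with value 11/5
  set d1 : SMD m := qlD {b} (Finset.singleton_nonempty b) (11/5) (by norm_num) with hd1
  set Ds1 := Function.update Ds i1 d1 with hDs1
  set P1 : Fin n → ClassicalPref m := fun i => (Ds1 i).pref with hP1
  have hT1 : ∀ j, P1 j ∈ T := fun j => hT _ (Ds1 j).sm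
  obtain ⟨-, ha1⟩ := lemU hab h01 Ds1
    (by rw [hDs1, Function.update_of_ne h01, hDs_def, Dstar_i0]; rfl)
    (by rw [hDs1, Function.update_self, hd1]; rfl)
    (fun i hi0 hi1 => by
      rw [hDs1, Function.update_of_ne hi1, hDs_def, Dstar_rest a b hi0 hi1]; exact ⟨rfl, rfl⟩)
    (by rw [hDs1, Function.update_self, Function.update_of_ne h01, hDs_def,
          Dstar_i0, hd1, qlD_kf0, nqD_kf0]; norm_num)
    (f P1) (p P1) (hAlloc P1 hT1) (hPE P1 hT1) (hIR P1 hT1) (hNS P1 hT1)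
  have hIR1 := hIR P1 hT1 i1
  have e2b : P1 i1 = d1.pref := by
    show (Ds1 i1).pref = d1.pref
    rw [hDs1, Function.update_self]
  rw [e2b, SMD.pref_def] at hIR1
  dsimp only at hIR1
  unfold SMD.u at hIR1
  rw [hd1, qlD_S, qlD_g, if_neg (by simp), if_pos (Finset.singleton_subset_iff.2 ha1)] at hIR1
  dsimp only at hIR1
  have hb1 : p P1 i1 ≤ 11 / 5 := by linarith
  have hDb := hDSIC Pst hTst i1 d1.pref (hT _ d1.sm)
  have eupb : Function.update Pst i1 d1.pref = P1 := by
    funext j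
    rcases eq_or_ne j i1 with rfl | hj
    · rw [Function.update_self]
      show d1.pref = (Ds1 i1).pref
      rw [hDs1, Function.update_self]
    · rw [Function.update_of_ne hj]
      show (Ds j).pref = (Ds1 j).pref
      rw [hDs1, Function.update_of_ne hj]
  rw [eupb] at hDb
  have e1p : Pst i1 = (nqD {b} (Finset.singleton_nonempty b)).pref := by
    show (Ds i1).pref = _
    rw [hDs_def, Dstar_i1 a b h01]
  rw [e1p, SMD.pref_def] at hDb
  dsimp only at hDb
  unfold SMD.u at hDb
  rw [nqD_S, nqD_g, if_pos (Finset.singleton_subset_iff.2 hbS),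
    if_pos (Finset.singleton_subset_iff.2 ha1)] at hDb
  dsimp only at hDb
  have hple1 : p Pst i1 ≤ 11 / 5 := by
    have h1 : hh (p Pst i1) ≤ hh (p P1 i1) := by linarith
    have := hh_mono.le_iff_le.1 h1
    linarith
  -- final domination at Pst : serve agent 2 instead
  have hamem : a ∈ ({a, b} : Finset (Fin m)) := mem_insert_self _ _
  have hNSst := hNS Pst hTst
  have hns2 : ¬ (Ds i2).S ⊆ f Pst i2 := by
    rw [hDs_def, Dstar_rest a b (Ne.symm h02) (Ne.symm h12), qlD_S]
    intro hsub
    exact (Finset.disjoint_left.1 (hAlloc Pst hTst i0 i2 h02) haS) (hsub hamem)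
  have hq2 : p Pst i2 = 0 := (Ds i2).pay_zero (hIR Pst hTst i2) (hNSst i2) hns2
  have key : ∀ (A' : Fin n → Finset (Fin m)) (t' : Fin n → ℝ), DisjointAlloc A' →
      (∀ i, (Ds i).u (A' i) (t' i) = (Ds i).u (f Pst i) (p Pst i)) →
      (∑ i, p Pst i < ∑ i, t' i) → False := by
    intro A' t' hd hu hlt
    exact hPE Pst hTst ⟨A', t', hd, fun i => le_of_eq (hu i).symm, le_of_lt hlt, Or.inr hlt⟩
  apply key (fun i => if i = i2 then ({a, b} : Finset (Fin m)) else ∅)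
    (fun i => if i = i2 then 6 else if i = i0 then hh (p Pst i0)
      else if i = i1 then hh (p Pst i1) else p Pst i)
  · intro i j hij
    try dsimp only
    by_cases hi : i = i2 <;> by_cases hj : j = i2
    · exact absurd (hi.trans hj.symm) hij
    · rw [if_pos hi, if_neg hj]; exact Finset.disjoint_empty_right _
    · rw [if_neg hi, if_pos hj]; exact Finset.disjoint_empty_left _
    · rw [if_neg hi, if_neg hj]; exact Finset.disjoint_empty_left _
  · intro i
    rcases eq_or_ne i i2 with rfl | hi2
    · try dsimp only
      rw [if_pos rfl, if_pos rfl]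
      have e : Ds i2 = qlD {a, b} (Finset.insert_nonempty a {b}) 6 (by norm_num) := by
        rw [hDs_def, Dstar_rest a b (Ne.symm h02) (Ne.symm h12)]
      rw [e]
      unfold SMD.u
      rw [qlD_S, qlD_g, if_pos (Finset.Subset.refl _),
        if_neg (by rw [e] at hns2; rw [qlD_S] at hns2; exact hns2)]
      try dsimp only
      rw [hq2]
      norm_num
    · rcases eq_or_ne i i0 with rfl | hi0
      · try dsimp only
        rw [if_neg hi2, if_neg hi2, if_pos rfl]
        have e : Ds i0 = nqD {a} (Finset.singleton_nonempty a) := by rw [hDs_def, Dstar_i0]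
        rw [e]
        unfold SMD.u
        rw [nqD_S, nqD_g, if_neg (by simp), if_pos (Finset.singleton_subset_iff.2 haS)]
      · rcases eq_or_ne i i1 with rfl | hi1
        · try dsimp only
          rw [if_neg hi2, if_neg hi2, if_neg hi0, if_pos rfl]
          have e : Ds i1 = nqD {b} (Finset.singleton_nonempty b) := by
            rw [hDs_def, Dstar_i1 a b h01]
          rw [e]
          unfold SMD.u
          rw [nqD_S, nqD_g, if_neg (by simp), if_pos (Finset.singleton_subset_iff.2 hbS)]
        · try dsimp only
          rw [if_neg hi2, if_neg hi2, if_neg hi0, if_neg hi1]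
          have e : Ds i = qlD {a, b} (Finset.insert_nonempty a {b}) 6 (by norm_num) := by
            rw [hDs_def, Dstar_rest a b hi0 hi1]
          rw [e]
          unfold SMD.u
          rw [qlD_S, if_neg (by simp), if_neg ?_]
          intro hsub
          exact (Finset.disjoint_left.1 (hAlloc Pst hTst i0 i (Ne.symm hi0)) haS) (hsub hamem)
  · rw [← sub_pos, ← Finset.sum_sub_distrib]
    have m2 : i2 ∈ (univ : Finset (Fin n)) := mem_univ _
    have m0 : i0 ∈ (univ : Finset (Fin n)).erase i2 := Finset.mem_erase.2 ⟨h02, mem_univ _⟩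
    have m1 : i1 ∈ ((univ : Finset (Fin n)).erase i2).erase i0 :=
      Finset.mem_erase.2 ⟨Ne.symm h01, Finset.mem_erase.2 ⟨h12, mem_univ _⟩⟩
    rw [← Finset.add_sum_erase _ _ m2, ← Finset.add_sum_erase _ _ m0,
      ← Finset.add_sum_erase _ _ m1]
    have e2t : (if i2 = i2 then (6:ℝ) else if i2 = i0 then hh (p Pst i0)
        else if i2 = i1 then hh (p Pst i1) else p Pst i2) - p Pst i2 = 6 := by
      rw [if_pos rfl, hq2]; ring
    have e0t : (if i0 = i2 then (6:ℝ) else if i0 = i0 then hh (p Pst i0)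
        else if i0 = i1 then hh (p Pst i1) else p Pst i0) - p Pst i0
        = hh (p Pst i0) - p Pst i0 := by
      rw [if_neg h02, if_pos rfl]
    have e1t : (if i1 = i2 then (6:ℝ) else if i1 = i0 then hh (p Pst i0)
        else if i1 = i1 then hh (p Pst i1) else p Pst i1) - p Pst i1
        = hh (p Pst i1) - p Pst i1 := by
      rw [if_neg h12, if_neg (Ne.symm h01), if_pos rfl]
    rw [e2t, e0t, e1t]
    have erest : ∑ i ∈ (((univ : Finset (Fin n)).erase i2).erase i0).erase i1,
        ((if i = i2 then (6:ℝ) else if i = i0 then hh (p Pst i0)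
          else if i = i1 then hh (p Pst i1) else p Pst i) - p Pst i) = 0 := by
      apply Finset.sum_eq_zero
      intro i hi
      have hi1 : i ≠ i1 := (Finset.mem_erase.1 hi).1
      have hi0 : i ≠ i0 := (Finset.mem_erase.1 (Finset.mem_erase.1 hi).2).1
      have hi2 : i ≠ i2 := (Finset.mem_erase.1 (Finset.mem_erase.1 (Finset.mem_erase.1 hi).2).2).1
      rw [if_neg hi2, if_neg hi0, if_neg hi1]; ring
    rw [erest]
    have hg0 := hh_ge (p Pst i0) hple0
    have hg1 := hh_ge (p Pst i1) hple1
    linarith
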